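/- arXiv:2408.12822 — 5 statements merged into one kernel-verified Lean document; each statement's English description precedes it below -/
import Mathlib

section
/- (Theorem 1, probabilistic core.) Let (Ω, ℱ, P) be a probability space, H : Ω → ℝ an integrable random variable, and α ∈ (0,1). If P(H ≥ VaR_α(H)) > 0 and CVaR_α(H) ≤ 0, then P(H ≤ 0) ≥ 1 − α. -/
open MeasureTheory
open Filter Topology ENNReal

/-- Value-at-risk at confidence level `α`:
`VaR_α(H) = inf { t : ℝ | P(H ≥ t) ≤ α }`. -/
noncomputable def VaR {Ω : Type*} [MeasurableSpace Ω] (P : Measure Ω) (H : Ω → ℝ) (α : ℝ) : ℝ :=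
  sInf {t : ℝ | (P {ω | t ≤ H ω}).toReal ≤ α}

/-- Conditional value-at-risk: the conditional expectation of `H` given the
event `{H ≥ VaR_α(H)}`. -/
noncomputable def CVaR {Ω : Type*} [MeasurableSpace Ω] (P : Measure Ω) (H : Ω → ℝ) (α : ℝ) : ℝ :=
  (∫ ω in {ω | VaR P H α ≤ H ω}, H ω ∂P) / (P {ω | VaR P H α ≤ H ω}).toReal

/-- Theorem 1 (probabilistic core): if `P(H ≥ VaR_α(H)) > 0` and `CVaR_α(H) ≤ 0`,
then `P(H ≤ 0) ≥ 1 − α`. -/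
theorem cvar_nonpos_imp_safety
    {Ω : Type*} [MeasurableSpace Ω] (P : Measure Ω) [IsProbabilityMeasure P]
    (H : Ω → ℝ) (hH : Integrable H P) (α : ℝ) (hα : α ∈ Set.Ioo (0 : ℝ) 1)
    (hpos : 0 < (P {ω | VaR P H α ≤ H ω}).toReal)
    (hcvar : CVaR P H α ≤ 0) :
    1 - α ≤ (P {ω | H ω ≤ 0}).toReal := by
  obtain ⟨hα0, hα1⟩ := hα
  obtain ⟨g, hgm, hg⟩ := hH.1
  have hgmeas : Measurable g := hgm.measurable
  -- measures of level sets agree for H and g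
  have key : ∀ t : ℝ, P {ω | t ≤ H ω} = P {ω | t ≤ g ω} := by
    intro t
    apply measure_congr
    filter_upwards [hg] with ω h
    show (t ≤ H ω) = (t ≤ g ω)
    rw [h]
  set S : Set ℝ := {t : ℝ | (P {ω | t ≤ H ω}).toReal ≤ α} with hS
  have hVaR : VaR P H α = sInf S := rfl
  -- S is nonempty
  have hSne : S.Nonempty := by
    have htend : Tendsto (fun n : ℕ => P {ω | (n : ℝ) ≤ g ω}) atTop
        (𝓝 (P (⋂ n : ℕ, {ω | (n : ℝ) ≤ g ω}))) := by
      refine tendsto_measure_iInter_atTop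
        (fun n => (hgmeas measurableSet_Ici).nullMeasurableSet) ?_ ⟨0, measure_ne_top P _⟩
      intro n m hnm ω hω
      simp only [Set.mem_setOf_eq] at hω ⊢
      exact le_trans (by exact_mod_cast hnm) hω
    have hempty : (⋂ n : ℕ, {ω | (n : ℝ) ≤ g ω}) = ∅ := by
      ext ω
      simp only [Set.mem_iInter, Set.mem_setOf_eq, Set.mem_empty_iff_false, iff_false, not_forall,
        not_le]
      obtain ⟨n, hn⟩ := exists_nat_gt (g ω)
      exact ⟨n, hn⟩
    rw [hempty, measure_empty] at htend
    have hev : ∀ᶠ n : ℕ in atTop, P {ω | (n : ℝ) ≤ g ω} < ENNReal.ofReal α :=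
      htend.eventually_lt_const (by simpa using hα0)
    obtain ⟨n, hn⟩ := hev.exists
    refine ⟨(n : ℝ), ?_⟩
    have : (P {ω | (n : ℝ) ≤ H ω}) ≤ ENNReal.ofReal α := by rw [key]; exact hn.le
    calc (P {ω | (n : ℝ) ≤ H ω}).toReal ≤ (ENNReal.ofReal α).toReal :=
          ENNReal.toReal_mono ENNReal.ofReal_ne_top this
      _ = α := ENNReal.toReal_ofReal hα0.le
  -- membership in S from being above VaR (needs a witness below)
  have hmemS : ∀ t : ℝ, VaR P H α < t → P {ω | t ≤ H ω} ≤ ENNReal.ofReal α := by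
    intro t ht
    obtain ⟨s, hs, hst⟩ := exists_lt_of_csInf_lt hSne (hVaR ▸ ht)
    have h1 : P {ω | t ≤ H ω} ≤ P {ω | s ≤ H ω} :=
      measure_mono fun ω h => le_trans hst.le h
    refine h1.trans ?_
    rw [ENNReal.le_ofReal_iff_toReal_le (measure_ne_top P _) hα0.le]
    exact hs
  by_cases hv : VaR P H α ≤ 0
  · -- main case: show P(H > 0) ≤ α
    have hU : {ω | 0 < g ω} = ⋃ n : ℕ, {ω | 1 / ((n : ℝ) + 1) ≤ g ω} := by
      ext ω
      simp only [Set.mem_setOf_eq, Set.mem_iUnion]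
      constructor
      · intro h
        obtain ⟨n, hn⟩ := exists_nat_one_div_lt h
        exact ⟨n, hn.le⟩
      · rintro ⟨n, hn⟩
        exact lt_of_lt_of_le (by positivity) hn
    have hmono : Monotone fun n : ℕ => {ω | 1 / ((n : ℝ) + 1) ≤ g ω} := by
      intro n m hnm ω hω
      simp only [Set.mem_setOf_eq] at hω ⊢
      have hnm' : (n : ℝ) + 1 ≤ (m : ℝ) + 1 := by
        have : (n : ℝ) ≤ (m : ℝ) := by exact_mod_cast hnm
        linarith
      have h2 := one_div_le_one_div_of_le (by positivity : (0:ℝ) < (n : ℝ) + 1) hnm'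
      linarith
    have htendU : Tendsto (fun n : ℕ => P {ω | 1 / ((n : ℝ) + 1) ≤ g ω}) atTop
        (𝓝 (P {ω | 0 < g ω})) := by
      rw [hU]; exact tendsto_measure_iUnion_atTop hmono
    have hbound : P {ω | 0 < g ω} ≤ ENNReal.ofReal α := by
      refine le_of_tendsto' htendU fun n => ?_
      rw [← key]
      exact hmemS _ (lt_of_le_of_lt hv (by positivity))
    have hgH : P {ω | 0 < H ω} ≤ ENNReal.ofReal α := by
      have : P {ω | 0 < H ω} = P {ω | 0 < g ω} := by
        apply measure_congr
        filter_upwards [hg] with ω h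
        show (0 < H ω) = (0 < g ω)
        rw [h]
      rw [this]; exact hbound
    -- complement argument
    have hsub : (1 : ℝ≥0∞) ≤ P {ω | H ω ≤ 0} + P {ω | 0 < H ω} := by
      have : (Set.univ : Set Ω) ⊆ {ω | H ω ≤ 0} ∪ {ω | 0 < H ω} := by
        intro ω _
        rcases le_or_gt (H ω) 0 with h | h
        · exact Or.inl h
        · exact Or.inr h
      calc (1 : ℝ≥0∞) = P Set.univ := (measure_univ).symm
        _ ≤ P ({ω | H ω ≤ 0} ∪ {ω | 0 < H ω}) := measure_mono this
        _ ≤ _ := measure_union_le _ _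
    have h1 : (1 : ℝ) ≤ (P {ω | H ω ≤ 0}).toReal + (P {ω | 0 < H ω}).toReal := by
      have := ENNReal.toReal_mono (by
        exact ENNReal.add_ne_top.2 ⟨measure_ne_top P _, measure_ne_top P _⟩) hsub
      rwa [ENNReal.toReal_one, ENNReal.toReal_add (measure_ne_top P _) (measure_ne_top P _)]
        at this
    have h2 : (P {ω | 0 < H ω}).toReal ≤ α := by
      calc (P {ω | 0 < H ω}).toReal ≤ (ENNReal.ofReal α).toReal :=
            ENNReal.toReal_mono ENNReal.ofReal_ne_top hgH
        _ = α := ENNReal.toReal_ofReal hα0.le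
    linarith
  · -- contradiction case: VaR > 0
    exfalso
    push_neg at hv
    set A : Set Ω := {ω | VaR P H α ≤ H ω} with hA
    have hAnull : NullMeasurableSet A P := by
      have hm : MeasurableSet {ω | VaR P H α ≤ g ω} := hgmeas measurableSet_Ici
      refine hm.nullMeasurableSet.congr ?_
      filter_upwards [hg] with ω h
      show (VaR P H α ≤ g ω) = (VaR P H α ≤ H ω)
      rw [h]
    have hint : (∫ ω in A, H ω ∂P) ≤ 0 := by
      have := (div_le_iff₀ hpos).mp hcvar
      simpa using this
    have hlb : VaR P H α * (P A).toReal ≤ ∫ ω in A, H ω ∂P := by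
      have hae : ∀ᵐ ω ∂(P.restrict A), VaR P H α ≤ H ω := by
        filter_upwards [ae_restrict_mem₀ hAnull] with ω h
        exact h
      calc VaR P H α * (P A).toReal = ∫ _ in A, VaR P H α ∂P := by
            rw [setIntegral_const, smul_eq_mul, mul_comm]; rfl
        _ ≤ ∫ ω in A, H ω ∂P :=
            integral_mono_ae (integrable_const _) hH.integrableOn hae
    have : 0 < VaR P H α * (P A).toReal := mul_pos hv hpos
    linarith
end

section
/- (Theorem 1, Gaussian case.) Let H : Ω → ℝ be a random variable whose law is the Gaussian measure on ℝ with mean μ ∈ ℝ and variance v > 0, and let α ∈ (0,1). If CVaR_α(H) ≤ 0, then P(H ≥ 0) ≤ α and P(H ≤ 0) ≥ 1 − α. -/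
open MeasureTheory ProbabilityTheory
open scoped NNReal

lemma integrable_mul_gaussianPDFReal (μ : ℝ) {v : ℝ≥0} (hv : v ≠ 0) :
    Integrable (fun x : ℝ => x * gaussianPDFReal μ v x) := by
  have hvpos : (0 : ℝ) < v := by positivity
  set b : ℝ := (2 * (v:ℝ))⁻¹ with hbdef
  have hb : (0 : ℝ) < b := by positivity
  have h1 := integrable_mul_exp_neg_mul_sq hb
  have h2 := (integrable_exp_neg_mul_sq hb).const_mul μ
  have hg : Integrable (fun y : ℝ => (y + μ) * Real.exp (-b * y ^ 2)) := by
    have h3 := h1.add h2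
    suffices h4 : (fun y : ℝ => (y + μ) * Real.exp (-b * y ^ 2)) = (fun x => x * Real.exp (-b * x ^ 2)) + fun x => μ * Real.exp (-b * x ^ 2) by rw [h4]; exact h3
    funext y
    simp only [Pi.add_apply]
    ring
  have hshift := hg.comp_sub_right μ
  have heq : (fun x : ℝ => x * gaussianPDFReal μ v x) =
      fun x => (Real.sqrt (2 * Real.pi * v))⁻¹ *
        ((x - μ + μ) * Real.exp (-b * (x - μ) ^ 2)) := by
    funext x
    rw [gaussianPDFReal]
    have hx : -(x - μ) ^ 2 / (2 * (v:ℝ)) = -b * (x - μ) ^ 2 := by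
      rw [hbdef]; field_simp
    rw [hx]
    ring_nf
  rw [heq]
  exact hshift.const_mul _

lemma integrable_id_gaussianReal (μ : ℝ) {v : ℝ≥0} (hv : v ≠ 0) :
    Integrable (id : ℝ → ℝ) (gaussianReal μ v) := by
  rw [gaussianReal_of_var_ne_zero _ hv,
    integrable_withDensity_iff (measurable_gaussianPDF μ v)
      (Filter.Eventually.of_forall fun x => ENNReal.ofReal_lt_top)]
  have : (fun x : ℝ => id x * (gaussianPDF μ v x).toReal) =
      fun x => x * gaussianPDFReal μ v x := by
    funext x
    simp [gaussianPDF, ENNReal.toReal_ofReal (gaussianPDFReal_nonneg μ v x)]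
  rw [this]
  exact integrable_mul_gaussianPDFReal μ hv

/-- Theorem 1, Gaussian case: for a Gaussian random variable `H` with mean `μ`
and variance `v > 0`, `CVaR_α(H) ≤ 0` implies `P(H ≥ 0) ≤ α` and `P(H ≤ 0) ≥ 1 − α`. -/
theorem cvar_nonpos_imp_safety_gaussian
    {Ω : Type*} [MeasurableSpace Ω] (P : Measure Ω) [IsProbabilityMeasure P]
    (H : Ω → ℝ) (hmeas : Measurable H) (μ : ℝ) (v : ℝ≥0) (hv : 0 < v)
    (hlaw : P.map H = gaussianReal μ v)
    (α : ℝ) (hα : α ∈ Set.Ioo (0 : ℝ) 1)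
    (hcvar : CVaR P H α ≤ 0) :
    (P {ω | 0 ≤ H ω}).toReal ≤ α ∧ 1 - α ≤ (P {ω | H ω ≤ 0}).toReal := by
  obtain ⟨hα0, hα1⟩ := hα
  have hv' : v ≠ 0 := hv.ne'
  set G : Measure ℝ := gaussianReal μ v with hG
  -- translation of tail probabilities
  have hkey : ∀ t : ℝ, P {ω | t ≤ H ω} = G (Set.Ici t) := by
    intro t
    have : {ω | t ≤ H ω} = H ⁻¹' Set.Ici t := rfl
    rw [this, ← hlaw, ← Measure.map_apply hmeas measurableSet_Ici]
  have hGfin : ∀ s : Set ℝ, G s ≠ ⊤ := fun s => measure_ne_top G s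
  set c : ℝ := VaR P H α with hc
  set A : Set Ω := {ω | c ≤ H ω} with hA
  have hAmeas : MeasurableSet A := hmeas measurableSet_Ici
  have hPA : P A = G (Set.Ici c) := hkey c
  -- positivity of the tail
  have hpos : 0 < G (Set.Ici c) := by
    rcases eq_zero_or_pos (G (Set.Ici c)) with h | h
    · exfalso
      have := gaussianReal_absolutelyContinuous' μ hv' h
      have hvol : (volume : Measure ℝ) (Set.Ici c) = ⊤ := by simp
      rw [this] at hvol
      exact (by simp at hvol)
    · exact h
  have hr : 0 < (P A).toReal := by
    rw [hPA]
    exact ENNReal.toReal_pos hpos.ne' (hGfin _)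
  -- integrability of H
  have hint : Integrable H P := by
    have h : Integrable (id : ℝ → ℝ) (P.map H) ↔ Integrable (id ∘ H) P :=
      integrable_map_measure aestronglyMeasurable_id hmeas.aemeasurable
    rw [hlaw] at h
    exact h.mp (integrable_id_gaussianReal μ hv')
  -- VaR ≤ CVaR ≤ 0, so c ≤ 0
  have hlow : c * (P A).toReal ≤ ∫ ω in A, H ω ∂P :=
    setIntegral_ge_of_const_le_real hAmeas (measure_ne_top P A) (fun ω hω => hω)
      hint.integrableOn
  have hintA : (∫ ω in A, H ω ∂P) ≤ 0 := by
    have h := hcvar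
    rw [CVaR] at h
    have := (div_le_iff₀ hr).mp h
    simpa using this
  have hc0 : c ≤ 0 := by nlinarith
  -- the tail function
  set g : ℝ → ℝ := fun t => (G (Set.Ici t)).toReal with hgdef
  have hanti : Antitone g := fun s t hst =>
    ENNReal.toReal_mono (hGfin _) (measure_mono (Set.Ici_subset_Ici.mpr hst))
  -- the VaR set
  have hset : {t : ℝ | (P {ω | t ≤ H ω}).toReal ≤ α} = {t : ℝ | g t ≤ α} := by
    ext t; simp [hkey t, hgdef]
  -- nonemptiness of the VaR set
  have hne : ({t : ℝ | g t ≤ α}).Nonempty := by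
    have htend : Filter.Tendsto (fun n : ℕ => G (Set.Ici (n : ℝ))) Filter.atTop
        (nhds (G (⋂ n : ℕ, Set.Ici (n : ℝ)))) := by
      refine tendsto_measure_iInter_atTop (fun n => (measurableSet_Ici).nullMeasurableSet)
        (fun m n hmn => Set.Ici_subset_Ici.mpr (by exact_mod_cast hmn)) ⟨0, hGfin _⟩
    have hempty : (⋂ n : ℕ, Set.Ici (n : ℝ)) = ∅ := by
      ext x
      simp only [Set.mem_iInter, Set.mem_Ici, Set.mem_empty_iff_false, iff_false, not_forall,
        not_le]
      obtain ⟨n, hn⟩ := exists_nat_gt x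
      exact ⟨n, hn⟩
    rw [hempty, measure_empty] at htend
    have hev : ∀ᶠ n : ℕ in Filter.atTop, G (Set.Ici (n : ℝ)) < ENNReal.ofReal α :=
      htend.eventually_lt_const (by simp [ENNReal.ofReal_pos, hα0])
    obtain ⟨n, hn⟩ := hev.exists
    exact ⟨n, ENNReal.toReal_le_of_le_ofReal hα0.le hn.le⟩
  -- g c ≤ α
  have hgc : g c ≤ α := by
    have hcs : c = sInf {t : ℝ | g t ≤ α} := by rw [hc, VaR, hset]
    have hstep : ∀ n : ℕ, G (Set.Ici (c + 1 / (n + 1))) ≤ ENNReal.ofReal α := by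
      intro n
      have hpos' : (0 : ℝ) < 1 / (n + 1 : ℝ) := by positivity
      obtain ⟨s, hs, hslt⟩ := Real.lt_sInf_add_pos hne hpos'
      rw [← hcs] at hslt
      have : g (c + 1 / (n + 1)) ≤ g s := hanti hslt.le
      have hle : g (c + 1 / (n + 1)) ≤ α := this.trans hs
      exact (ENNReal.le_ofReal_iff_toReal_le (hGfin _) hα0.le).mpr hle
    have hunion : (⋃ n : ℕ, Set.Ici (c + 1 / (n + 1))) = Set.Ioi c := by
      ext x
      simp only [Set.mem_iUnion, Set.mem_Ici, Set.mem_Ioi]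
      constructor
      · rintro ⟨n, hn⟩
        have : (0 : ℝ) < 1 / (n + 1 : ℝ) := by positivity
        linarith
      · intro hx
        obtain ⟨n, hn⟩ := exists_nat_one_div_lt (sub_pos.mpr hx)
        exact ⟨n, by linarith⟩
    have htend : Filter.Tendsto (fun n : ℕ => G (Set.Ici (c + 1 / (n + 1)))) Filter.atTop
        (nhds (G (Set.Ioi c))) := by
      rw [← hunion]
      refine tendsto_measure_iUnion_atTop (fun m n hmn => Set.Ici_subset_Ici.mpr ?_)
      have : (1 : ℝ) / (n + 1) ≤ 1 / (m + 1) := by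
        apply one_div_le_one_div_of_le (by positivity)
        exact_mod_cast add_le_add_left (Nat.cast_le.mpr hmn) 1
      linarith
    have hIoi : G (Set.Ioi c) ≤ ENNReal.ofReal α :=
      le_of_tendsto htend (Filter.Eventually.of_forall hstep)
    have hsingleton : G {c} = 0 :=
      gaussianReal_absolutelyContinuous μ hv' (measure_singleton c)
    have hIci : G (Set.Ici c) ≤ ENNReal.ofReal α := by
      have : Set.Ici c ⊆ {c} ∪ Set.Ioi c := by
        intro x hx
        rcases eq_or_lt_of_le (Set.mem_Ici.mp hx) with h | h
        · exact Or.inl h.symm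
        · exact Or.inr h
      calc G (Set.Ici c) ≤ G ({c} ∪ Set.Ioi c) := measure_mono this
        _ ≤ G {c} + G (Set.Ioi c) := measure_union_le _ _
        _ = G (Set.Ioi c) := by rw [hsingleton, zero_add]
        _ ≤ ENNReal.ofReal α := hIoi
    exact ENNReal.toReal_le_of_le_ofReal hα0.le hIci
  -- first conclusion
  have h1 : (P {ω | 0 ≤ H ω}).toReal ≤ α := by
    rw [hkey 0]
    exact le_trans (hanti hc0) hgc
  refine ⟨h1, ?_⟩
  -- second conclusion
  have hcompl : {ω | H ω ≤ 0}ᶜ = {ω | 0 < H ω} := by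
    ext ω; simp [not_le]
  have hmeas0 : MeasurableSet {ω | H ω ≤ 0} := hmeas measurableSet_Iic
  have hPlt : P {ω | 0 < H ω} ≤ P {ω | 0 ≤ H ω} :=
    measure_mono (fun ω (hω : 0 < H ω) => le_of_lt hω)
  have h2 : P {ω | H ω ≤ 0} = 1 - P {ω | 0 < H ω} := by
    have h := prob_compl_eq_one_sub (μ := P) (s := {ω | 0 < H ω})
      (hmeas measurableSet_Ioi)
    have : ({ω | 0 < H ω} : Set Ω)ᶜ = {ω | H ω ≤ 0} := by ext ω; simp [not_lt]
    rwa [this] at h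
  have hlt : (P {ω | 0 < H ω}).toReal ≤ α :=
    le_trans (ENNReal.toReal_mono (measure_ne_top P _) hPlt) h1
  rw [h2, ENNReal.toReal_sub_of_le prob_le_one ENNReal.one_ne_top]
  simp only [ENNReal.toReal_one]
  linarith
end

section
/- (Equation (12): Acerbi–Tasche identity for Gaussian risks.) Let H : Ω → ℝ be a random variable whose law is the Gaussian measure on ℝ with mean μ ∈ ℝ and variance v > 0, and let α ∈ (0,1). Then (1/α) · ∫_{1−α}^{1} VaR_{1−λ}(H) dλ = E[H | H ≥ VaR_α(H)]; that is, the average of the value-at-risk over the worst α-tail of confidence levels equals the conditional value-at-risk. -/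
open MeasureTheory ProbabilityTheory
open scoped NNReal

open Set Filter Real

namespace AcerbiTascheAux

/-- Survival function of the Gaussian. -/
noncomputable def SF (μ : ℝ) (v : ℝ≥0) (t : ℝ) : ℝ :=
  (gaussianReal μ v (Set.Ici t)).toReal

variable {μ : ℝ} {v : ℝ≥0}

lemma gauss_singleton (hv : v ≠ 0) (x : ℝ) : gaussianReal μ v {x} = 0 :=
  gaussianReal_absolutelyContinuous μ hv (measure_singleton x)

lemma gauss_Ioi (hv : v ≠ 0) (t : ℝ) :
    gaussianReal μ v (Set.Ioi t) = gaussianReal μ v (Set.Ici t) :=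
  measure_congr (Ioi_ae_eq_Ici' (gauss_singleton hv t))

lemma SF_eq (hv : v ≠ 0) (t : ℝ) :
    SF μ v t = 1 - ∫ x in Set.Iic t, gaussianPDFReal μ v x := by
  have h1 : gaussianReal μ v (Set.Iic t) + gaussianReal μ v (Set.Ici t)
      = 1 := by
    have h0 : gaussianReal μ v (Set.Iio t) + gaussianReal μ v (Set.Ici t) = 1 := by
      have := measure_add_measure_compl (μ := gaussianReal μ v) (measurableSet_Iio (a := t))
      rwa [compl_Iio, measure_univ] at this
    rwa [measure_congr (Iio_ae_eq_Iic' (gauss_singleton hv t))] at h0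
  have h2 : (gaussianReal μ v (Set.Iic t)).toReal
      = ∫ x in Set.Iic t, gaussianPDFReal μ v x := by
    rw [gaussianReal_apply_eq_integral μ hv, ENNReal.toReal_ofReal]
    exact setIntegral_nonneg measurableSet_Iic fun x _ => gaussianPDFReal_nonneg μ v x
  have h3 := congrArg ENNReal.toReal h1
  rw [ENNReal.toReal_add (measure_ne_top _ _) (measure_ne_top _ _)] at h3
  simp only [ENNReal.toReal_one] at h3
  rw [SF, ← h2]
  linarith

lemma continuous_SF (hv : v ≠ 0) : Continuous (SF μ v) := by
  have hint : ∀ a b : ℝ, IntervalIntegrable (gaussianPDFReal μ v) volume a b :=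
    fun a b => (integrable_gaussianPDFReal μ v).intervalIntegrable
  have key : ∀ t : ℝ, SF μ v t
      = SF μ v 0 - ∫ x in (0:ℝ)..t, gaussianPDFReal μ v x := by
    intro t
    rw [SF_eq hv, SF_eq hv, ← intervalIntegral.integral_Iic_sub_Iic
      (integrable_gaussianPDFReal μ v).integrableOn (integrable_gaussianPDFReal μ v).integrableOn]
    ring
  have : SF μ v = fun t => SF μ v 0 - ∫ x in (0:ℝ)..t, gaussianPDFReal μ v x := funext key
  rw [this]
  exact continuous_const.sub (intervalIntegral.continuous_primitive hint 0)

lemma strictAnti_SF (hv : v ≠ 0) : StrictAnti (SF μ v) := by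
  intro a b hab
  rw [SF_eq hv, SF_eq hv]
  have h : (0:ℝ) < ∫ x in a..b, gaussianPDFReal μ v x :=
    intervalIntegral.intervalIntegral_pos_of_pos_on
      (integrable_gaussianPDFReal μ v).intervalIntegrable
      (fun x _ => gaussianPDFReal_pos μ v x hv) hab
  rw [← intervalIntegral.integral_Iic_sub_Iic
      (integrable_gaussianPDFReal μ v).integrableOn
      (integrable_gaussianPDFReal μ v).integrableOn] at h
  linarith

lemma tendsto_SF_atBot (hv : v ≠ 0) : Tendsto (SF μ v) atBot (nhds 1) := by
  have h := tendsto_measure_Ici_atBot (gaussianReal μ v)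
  have h2 := (ENNReal.tendsto_toReal (a := gaussianReal μ v Set.univ)
      (measure_ne_top _ _)).comp h
  exact (by simpa [Function.comp_def] using h2 :
    Tendsto (fun x => ((gaussianReal μ v) (Ici x)).toReal) atBot (nhds 1))

lemma tendsto_SF_atTop (hv : v ≠ 0) : Tendsto (SF μ v) atTop (nhds 0) := by
  have h := tendsto_measure_Iic_atTop (gaussianReal μ v)
  have h2 := (ENNReal.tendsto_toReal (a := gaussianReal μ v Set.univ)
      (measure_ne_top _ _)).comp h
  have h3 : Tendsto (fun t => (gaussianReal μ v (Set.Iic t)).toReal) atTop (nhds 1) := by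
    simpa [Function.comp_def] using h2
  have h4 : Tendsto (fun t => (1:ℝ) - (gaussianReal μ v (Set.Iic t)).toReal) atTop
      (nhds (1 - 1)) := tendsto_const_nhds.sub h3
  have heq : ∀ t : ℝ, SF μ v t = 1 - (gaussianReal μ v (Set.Iic t)).toReal := by
    intro t
    rw [SF_eq hv]
    congr 1
    rw [gaussianReal_apply_eq_integral μ hv, ENNReal.toReal_ofReal]
    exact setIntegral_nonneg measurableSet_Iic fun x _ => gaussianPDFReal_nonneg μ v x
  simp only [funext heq]
  simpa using h4

lemma exists_root (hv : v ≠ 0) {β : ℝ} (hβ : β ∈ Set.Ioo (0:ℝ) 1) :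
    ∃ t, SF μ v t = β := by
  obtain ⟨a, ha⟩ := ((tendsto_SF_atBot hv).eventually (eventually_gt_nhds hβ.2)).exists
  obtain ⟨b, hb⟩ := ((tendsto_SF_atTop hv).eventually (eventually_lt_nhds hβ.1)).exists
  have hmem : β ∈ Set.uIcc (SF μ v a) (SF μ v b) := by
    rw [Set.mem_uIcc]
    exact Or.inr ⟨hb.le, ha.le⟩
  obtain ⟨t, _, ht⟩ := intermediate_value_uIcc (continuous_SF hv).continuousOn hmem
  exact ⟨t, ht⟩

lemma SF_pos (hv : v ≠ 0) (t : ℝ) : 0 < SF μ v t :=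
  lt_of_le_of_lt ENNReal.toReal_nonneg (strictAnti_SF hv (lt_add_one t))

lemma integrable_id_gaussian (hv : v ≠ 0) :
    Integrable (fun x : ℝ => x) (gaussianReal μ v) := by
  rw [gaussianReal_of_var_ne_zero μ hv,
    integrable_withDensity_iff (measurable_gaussianPDF μ v)
      (Filter.Eventually.of_forall fun x => ENNReal.ofReal_lt_top)]
  have hpdf : ∀ x : ℝ, (gaussianPDF μ v x).toReal = gaussianPDFReal μ v x := fun x =>
    ENNReal.toReal_ofReal (gaussianPDFReal_nonneg μ v x)
  simp only [hpdf]
  have hb : (0:ℝ) < (2 * (v:ℝ))⁻¹ := by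
    have : (0:ℝ) < (v:ℝ) := by exact_mod_cast pos_iff_ne_zero.mpr hv
    positivity
  set b : ℝ := (2 * (v:ℝ))⁻¹ with hbdef
  set c : ℝ := (Real.sqrt (2 * π * v))⁻¹ with hcdef
  have hg : Integrable (fun y : ℝ => (y + μ) * (c * Real.exp (-b * y ^ 2))) volume := by
    have h1 : Integrable (fun y : ℝ => y * Real.exp (-b * y ^ 2)) volume := by
      simpa [Real.rpow_one] using
        integrable_rpow_mul_exp_neg_mul_sq hb (s := 1) (by norm_num)
    have h2 : Integrable (fun y : ℝ => Real.exp (-b * y ^ 2)) volume :=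
      integrable_exp_neg_mul_sq hb
    have heq : (fun y : ℝ => (y + μ) * (c * Real.exp (-b * y ^ 2)))
        = fun y => c * (y * Real.exp (-b * y ^ 2)) + (μ * c) * Real.exp (-b * y ^ 2) := by
      funext y; ring
    rw [heq]
    exact (h1.const_mul c).add (h2.const_mul (μ * c))
  have hcomp := ((measurePreserving_add_right volume (-μ)).integrable_comp_emb
      (MeasurableEquiv.addRight (-μ)).measurableEmbedding).mpr hg
  refine hcomp.congr (Filter.Eventually.of_forall fun x => ?_)
  simp only [Function.comp]
  rw [gaussianPDFReal]
  have harg : -(x - μ) ^ 2 / (2 * (v:ℝ)) = -b * (x + -μ) ^ 2 := by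
    rw [hbdef]
    have h2v : (2 * (v:ℝ)) ≠ 0 := by
      have : (0:ℝ) < (v:ℝ) := by exact_mod_cast pos_iff_ne_zero.mpr hv
      positivity
    field_simp
    ring
  rw [← hcdef, ← harg]
  ring_nf

end AcerbiTascheAux

/-- Equation (12): the Acerbi–Tasche identity for Gaussian risks. The average of
the value-at-risk over the worst `α`-tail of confidence levels equals the
conditional expectation of `H` given `{H ≥ VaR_α(H)}`. -/
theorem acerbi_tasche_gaussian
    {Ω : Type*} [MeasurableSpace Ω] (P : Measure Ω) [IsProbabilityMeasure P]
    (H : Ω → ℝ) (hmeas : Measurable H) (μ : ℝ) (v : ℝ≥0) (hv : 0 < v)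
    (hlaw : P.map H = gaussianReal μ v)
    (α : ℝ) (hα : α ∈ Set.Ioo (0 : ℝ) 1) :
    (1 / α) * ∫ l in (1 - α)..(1 : ℝ), VaR P H (1 - l)
      = (∫ ω in {ω | VaR P H α ≤ H ω}, H ω ∂P) / (P {ω | VaR P H α ≤ H ω}).toReal := by
  obtain ⟨hα0, hα1⟩ := hα
  have hα01 : α ∈ Set.Ioo (0:ℝ) 1 := ⟨hα0, hα1⟩
  have hv' : v ≠ 0 := hv.ne'
  set γ := gaussianReal μ v with hγdef
  set S := AcerbiTascheAux.SF μ v with hSdef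
  have hSanti : StrictAnti S := AcerbiTascheAux.strictAnti_SF hv'
  have hmap : ∀ t : ℝ, P {ω | t ≤ H ω} = γ (Set.Ici t) := by
    intro t
    have h : {ω | t ≤ H ω} = H ⁻¹' (Set.Ici t) := rfl
    rw [h, ← Measure.map_apply hmeas measurableSet_Ici, hlaw]
  have hVaR_root : ∀ β ∈ Set.Ioo (0:ℝ) 1, S (VaR P H β) = β := by
    intro β hβ
    obtain ⟨t, ht⟩ := AcerbiTascheAux.exists_root (μ := μ) hv' hβ
    have hset : {u : ℝ | (P {ω | u ≤ H ω}).toReal ≤ β} = Set.Ici t := by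
      ext u
      simp only [Set.mem_setOf_eq, hmap, Set.mem_Ici]
      rw [show (γ (Set.Ici u)).toReal = S u from rfl, ← ht]
      exact hSanti.le_iff_ge
    rw [VaR, hset, csInf_Ici]
    exact ht
  set t₀ := VaR P H α with ht₀def
  have ht₀ : S t₀ = α := hVaR_root α hα01
  have hVaR_gt : ∀ β ∈ Set.Ioo (0:ℝ) 1, ∀ s : ℝ, s < VaR P H β ↔ β < S s := by
    intro β hβ s
    have hr := hVaR_root β hβ
    constructor
    · intro h; rw [← hr]; exact hSanti h
    · intro h; rw [← hr] at h; exact hSanti.lt_iff_gt.mp h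
  have hVaR_anti : ∀ β₁ β₂, β₁ ∈ Set.Ioo (0:ℝ) 1 → β₂ ∈ Set.Ioo (0:ℝ) 1 → β₁ ≤ β₂ →
      VaR P H β₂ ≤ VaR P H β₁ := by
    intro β₁ β₂ h1 h2 h
    exact hSanti.le_iff_ge.mp (by rw [hVaR_root β₁ h1, hVaR_root β₂ h2]; exact h)
  have hγint : Integrable (fun x : ℝ => x) γ := AcerbiTascheAux.integrable_id_gaussian hv'
  have hHint : Integrable H P := by
    have h := AcerbiTascheAux.integrable_id_gaussian (μ := μ) (v := v) hv'
    rw [← hγdef, ← hlaw] at h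
    exact (integrable_map_measure aestronglyMeasurable_id hmeas.aemeasurable).mp h
  have hPA : (P {ω | t₀ ≤ H ω}).toReal = α := by
    rw [hmap t₀]; exact ht₀
  have hnum : ∫ ω in {ω | t₀ ≤ H ω}, H ω ∂P = ∫ x in Set.Ici t₀, x ∂γ := by
    have hf : AEStronglyMeasurable (fun x : ℝ => x) (Measure.map H P) := by
      rw [hlaw]; exact aestronglyMeasurable_id
    have h := setIntegral_map (f := fun x : ℝ => x) (s := Set.Ici t₀) measurableSet_Ici hf hmeas.aemeasurable
    rw [hlaw] at h
    exact h.symm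
  set g : ℝ → ℝ := fun x => max (x - t₀) 0 with hgdef
  have hgint : Integrable g γ := (hγint.sub (integrable_const t₀)).pos_part
  have hgnn : 0 ≤ᵐ[γ] g := Filter.Eventually.of_forall fun x => le_max_right _ _
  have hgsets : ∀ t ∈ Set.Ioi (0:ℝ), γ {x | t < g x} = ENNReal.ofReal (S (t₀ + t)) := by
    intro t ht
    have ht' : (0:ℝ) < t := ht
    have hset : {x : ℝ | t < g x} = Set.Ioi (t₀ + t) := by
      ext x
      simp only [hgdef, Set.mem_setOf_eq, Set.mem_Ioi, lt_max_iff]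
      constructor
      · rintro (h | h)
        · linarith
        · exact absurd h (not_lt.mpr ht'.le)
      · intro h; left; linarith
    rw [hset, AcerbiTascheAux.gauss_Ioi hv']
    exact (ENNReal.ofReal_toReal (measure_ne_top _ _)).symm
  have hγlint : ∫⁻ x, ENNReal.ofReal (g x) ∂γ
      = ∫⁻ t in Set.Ioi 0, ENNReal.ofReal (S (t₀ + t)) := by
    rw [lintegral_eq_lintegral_meas_lt γ hgnn hgint.aemeasurable]
    exact setLIntegral_congr_fun measurableSet_Ioi hgsets
  have hmeasν : AEMeasurable (VaR P H) (volume.restrict (Set.Ioc 0 α)) := by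
    refine aemeasurable_restrict_of_antitoneOn measurableSet_Ioc ?_
    intro β₁ h1 β₂ h2 h12
    exact hVaR_anti β₁ β₂ ⟨h1.1, lt_of_le_of_lt h1.2 hα1⟩ ⟨h2.1, lt_of_le_of_lt h2.2 hα1⟩ h12
  set f : ℝ → ℝ := fun β => VaR P H β - t₀ with hfdef
  have hfmeas : AEMeasurable f (volume.restrict (Set.Ioc 0 α)) := hmeasν.sub aemeasurable_const
  have hfnn : 0 ≤ᵐ[volume.restrict (Set.Ioc 0 α)] f := by
    filter_upwards [ae_restrict_mem measurableSet_Ioc] with β hβ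
    have h := hVaR_anti β α ⟨hβ.1, lt_of_le_of_lt hβ.2 hα1⟩ hα01 hβ.2
    simp only [hfdef, Pi.zero_apply]
    linarith
  have hνsets : ∀ t ∈ Set.Ioi (0:ℝ),
      (volume.restrict (Set.Ioc 0 α)) {β | t < f β} = ENNReal.ofReal (S (t₀ + t)) := by
    intro t ht
    have ht' : (0:ℝ) < t := ht
    have hlt : S (t₀ + t) < α := by rw [← ht₀]; exact hSanti (by linarith)
    have hset : {β : ℝ | t < f β} ∩ Set.Ioc 0 α = Set.Ioo 0 (S (t₀ + t)) := by
      ext β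
      simp only [Set.mem_inter_iff, Set.mem_setOf_eq, Set.mem_Ioc, Set.mem_Ioo, hfdef]
      constructor
      · rintro ⟨hfβ, hβ0, hβα⟩
        refine ⟨hβ0, ?_⟩
        have hβ1 : β ∈ Set.Ioo (0:ℝ) 1 := ⟨hβ0, lt_of_le_of_lt hβα hα1⟩
        have hgt : t₀ + t < VaR P H β := by linarith
        exact (hVaR_gt β hβ1 (t₀ + t)).mp hgt
      · rintro ⟨hβ0, hβS⟩
        have hβα' : β < α := lt_trans hβS hlt
        have hβ1 : β ∈ Set.Ioo (0:ℝ) 1 := ⟨hβ0, lt_trans hβα' hα1⟩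
        have h := (hVaR_gt β hβ1 (t₀ + t)).mpr hβS
        exact ⟨by linarith, hβ0, hβα'.le⟩
    rw [Measure.restrict_apply' measurableSet_Ioc, hset, Real.volume_Ioo, sub_zero]
  have hνlint : ∫⁻ β, ENNReal.ofReal (f β) ∂(volume.restrict (Set.Ioc 0 α))
      = ∫⁻ t in Set.Ioi 0, ENNReal.ofReal (S (t₀ + t)) := by
    rw [lintegral_eq_lintegral_meas_lt _ hfnn hfmeas]
    exact setLIntegral_congr_fun measurableSet_Ioi hνsets
  have hfin : ∫⁻ t in Set.Ioi 0, ENNReal.ofReal (S (t₀ + t)) < ⊤ := by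
    rw [← hγlint]; exact hgint.lintegral_lt_top
  have hfint : Integrable f (volume.restrict (Set.Ioc 0 α)) := by
    refine ⟨hfmeas.aestronglyMeasurable, ?_⟩
    rw [hasFiniteIntegral_iff_ofReal hfnn, hνlint]
    exact hfin
  have hkey : ∫ β in Set.Ioc 0 α, f β = ∫ x, g x ∂γ := by
    rw [integral_eq_lintegral_of_nonneg_ae hfnn hfmeas.aestronglyMeasurable,
        integral_eq_lintegral_of_nonneg_ae hgnn hgint.aestronglyMeasurable,
        hνlint, hγlint]
  have hWint : ∫ β in Set.Ioc 0 α, VaR P H β = (∫ x, g x ∂γ) + t₀ * α := by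
    have h1 : ∫ β in Set.Ioc 0 α, VaR P H β = ∫ β in Set.Ioc 0 α, (f β + t₀) := by
      refine setIntegral_congr_fun measurableSet_Ioc fun β _ => ?_
      simp [hfdef]
    rw [h1, integral_add hfint (integrable_const _), hkey, setIntegral_const, measureReal_def,
      Real.volume_Ioc, sub_zero, ENNReal.toReal_ofReal hα0.le, smul_eq_mul, mul_comm]
  have hNum2 : ∫ x in Set.Ici t₀, x ∂γ = (∫ x, g x ∂γ) + t₀ * α := by
    have hsub : ∫ x in Set.Ici t₀, (x - t₀) ∂γ = ∫ x, g x ∂γ := by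
      rw [← intervalIntegral.integral_Iio_add_Ici (b := t₀) hgint.integrableOn hgint.integrableOn]
      have h0 : ∫ x in Set.Iio t₀, g x ∂γ = 0 := by
        have := setIntegral_congr_fun (μ := γ) measurableSet_Iio
          (f := g) (g := fun _ => (0:ℝ)) (fun x hx => by
            simp only [hgdef]
            exact max_eq_right (sub_nonpos.mpr (le_of_lt hx)))
        rw [this, integral_zero]
      have h1 : ∫ x in Set.Ici t₀, g x ∂γ = ∫ x in Set.Ici t₀, (x - t₀) ∂γ :=
        setIntegral_congr_fun measurableSet_Ici fun x hx => by
          simp only [hgdef]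
          exact max_eq_left (sub_nonneg.mpr hx)
      rw [h0, h1, zero_add]
    have h2 : ∫ x in Set.Ici t₀, x ∂γ = ∫ x in Set.Ici t₀, ((x - t₀) + t₀) ∂γ := by
      refine setIntegral_congr_fun measurableSet_Ici fun x _ => ?_
      ring
    have hint1 : IntegrableOn (fun x : ℝ => x - t₀) (Set.Ici t₀) γ :=
      hγint.integrableOn.sub (integrable_const _).integrableOn
    have hint2 : IntegrableOn (fun _ : ℝ => t₀) (Set.Ici t₀) γ :=
      (integrable_const _).integrableOn
    rw [h2, integral_add hint1 hint2, hsub, setIntegral_const, smul_eq_mul,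
      show γ.real (Set.Ici t₀) = S t₀ from rfl, ht₀]
    ring
  have hIcc : ∫ l in (1 - α)..(1:ℝ), VaR P H (1 - l) = ∫ x in (0:ℝ)..α, VaR P H x := by
    rw [intervalIntegral.integral_comp_sub_left (fun x => VaR P H x) 1]
    have e1 : (1:ℝ) - 1 = 0 := by ring
    have e2 : (1:ℝ) - (1 - α) = α := by ring
    rw [e1, e2]
  have hIoc : ∫ x in (0:ℝ)..α, VaR P H x = ∫ β in Set.Ioc 0 α, VaR P H β :=
    intervalIntegral.integral_of_le hα0.le
  rw [hIcc, hIoc, hWint, hnum.trans hNum2, hPA, one_div, inv_mul_eq_div]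
end

section
/- (Lemma 1, forward invariance with linear class-K function.) Let d, m be positive integers, γ ≥ 0, and let h : ℝ^d → ℝ be continuously differentiable. Let f : ℝ^d → ℝ^d, g : ℝ^d → (ℝ^m →ₗ ℝ^d), and u : ℝ^d → ℝ^m be such that for every x ∈ ℝ^d the CBF condition ⟪∇h(x), f(x) + g(x)(u(x))⟫ ≥ −γ · h(x) holds. Let x : ℝ → ℝ^d be a trajectory satisfying the closed-loop dynamics, i.e., x is differentiable with x′(t) = f(x(t)) + g(x(t))(u(x(t))) for all t ≥ 0. If h(x(0)) ≥ 0, then h(x(t)) ≥ 0 for all t ≥ 0. -/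
open scoped RealInnerProductSpace

/-- Lemma 1, forward invariance with the linear class-K function `α(h) = γ h`:
if the CBF condition `⟪∇h(x), f(x) + g(x)u(x)⟫ ≥ −γ h(x)` holds everywhere and
`x(·)` is a closed-loop trajectory with `h(x(0)) ≥ 0`, then `h(x(t)) ≥ 0` for all
`t ≥ 0`. -/
theorem cbf_forward_invariance
    (d m : ℕ) (hd : 0 < d) (hm : 0 < m) (γ : ℝ) (hγ : 0 ≤ γ)
    (h : EuclideanSpace ℝ (Fin d) → ℝ) (hh : ContDiff ℝ 1 h)
    (f : EuclideanSpace ℝ (Fin d) → EuclideanSpace ℝ (Fin d))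
    (g : EuclideanSpace ℝ (Fin d) → (EuclideanSpace ℝ (Fin m) →ₗ[ℝ] EuclideanSpace ℝ (Fin d)))
    (u : EuclideanSpace ℝ (Fin d) → EuclideanSpace ℝ (Fin m))
    (hcbf : ∀ x : EuclideanSpace ℝ (Fin d), -γ * h x ≤ ⟪gradient h x, f x + g x (u x)⟫)
    (x : ℝ → EuclideanSpace ℝ (Fin d))
    (hx : ∀ t : ℝ, 0 ≤ t → HasDerivAt x (f (x t) + g (x t) (u (x t))) t)
    (h0 : 0 ≤ h (x 0)) :
    ∀ t : ℝ, 0 ≤ t → 0 ≤ h (x t) := by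
  -- consider F t = h (x t) * exp (γ t); show it is monotone on [0, ∞)
  set v : ℝ → EuclideanSpace ℝ (Fin d) := fun t => f (x t) + g (x t) (u (x t)) with hv
  have hy : ∀ t : ℝ, 0 ≤ t →
      HasDerivAt (fun s => h (x s)) (⟪gradient h (x t), v t⟫) t := by
    intro t ht
    have hdiff : DifferentiableAt ℝ h (x t) := (hh.differentiable one_ne_zero).differentiableAt
    have hg := hdiff.hasGradientAt
    rw [hasGradientAt_iff_hasFDerivAt] at hg
    have := hg.comp_hasDerivAt t (hx t ht)
    simpa [hv, Function.comp_def, map_add] using this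
  set F : ℝ → ℝ := fun t => h (x t) * Real.exp (γ * t) with hF
  have hF' : ∀ t : ℝ, 0 ≤ t →
      HasDerivAt F ((⟪gradient h (x t), v t⟫ + γ * h (x t)) * Real.exp (γ * t)) t := by
    intro t ht
    have he : HasDerivAt (fun s => Real.exp (γ * s)) (γ * Real.exp (γ * t)) t := by
      simpa [mul_comm, Function.comp_def] using (Real.hasDerivAt_exp (γ * t)).comp t
        ((hasDerivAt_id t).const_mul γ)
    have := (hy t ht).mul he
    convert this using 1
    all_goals first | rfl | ring
  have hmono : MonotoneOn F (Set.Ici 0) := by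
    apply monotoneOn_of_hasDerivWithinAt_nonneg (convex_Ici 0)
      (f' := fun t => (⟪gradient h (x t), v t⟫ + γ * h (x t)) * Real.exp (γ * t))
    · intro t ht
      exact ((hF' t ht).continuousAt).continuousWithinAt
    · intro t ht
      rw [interior_Ici] at ht
      exact (hF' t (le_of_lt ht)).hasDerivWithinAt
    · intro t ht
      rw [interior_Ici] at ht
      have h1 : -γ * h (x t) ≤ ⟪gradient h (x t), v t⟫ := hcbf (x t)
      have h2 : 0 ≤ ⟪gradient h (x t), v t⟫ + γ * h (x t) := by linarith
      positivity
  intro t ht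
  have : F 0 ≤ F t := hmono (Set.self_mem_Ici) ht ht
  have hF0 : F 0 = h (x 0) := by simp [hF]
  have hpos : 0 < Real.exp (γ * t) := Real.exp_pos _
  have h1 : h (x 0) ≤ h (x t) * Real.exp (γ * t) := by rw [hF0] at this; simpa [hF] using this
  nlinarith [h1, h0, hpos]
end

section
/- (Lemma 2, sampled-data safety over one sampling interval with linear class-K function.) Let d be a positive integer, γ ≥ 0, δ ≥ 0, l ≥ 0, dt > 0. Let h : ℝ^d → ℝ be continuously differentiable, let F : ℝ^d → ℝ^d be the closed-loop vector field obtained by holding the control constant over the interval, and define Ψ : ℝ^d → ℝ by Ψ(x) := ⟪∇h(x), F(x)⟫ + γ · h(x). Assume Ψ is Lipschitz continuous with constant l, and ‖F(y)‖ ≤ δ for all y ∈ ℝ^d. Let x : ℝ → ℝ^d be differentiable with x′(t) = F(x(t)) for all t ∈ [0, dt]. If h(x(0)) ≥ 0 and Ψ(x(0)) ≥ l · δ · dt, then h(x(t)) ≥ 0 for all t ∈ [0, dt]. -/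
open scoped RealInnerProductSpace

/-- Lemma 2: sampled-data safety over one sampling interval with the linear
class-K function `α(h) = γ h`. With `Ψ(x) = ⟪∇h(x), F(x)⟫ + γ h(x)` Lipschitz
with constant `l`, the speed of the closed-loop vector field `F` bounded by `δ`,
`h(x(0)) ≥ 0` and the sampled-data CBF condition `Ψ(x(0)) ≥ l·δ·dt`, the safe
set `{h ≥ 0}` is not left during the sampling interval `[0, dt]`. -/
theorem sampled_data_cbf_safety
    (d : ℕ) (hd : 0 < d) (γ δ l dt : ℝ)
    (hγ : 0 ≤ γ) (hδ : 0 ≤ δ) (hl : 0 ≤ l) (hdt : 0 < dt)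
    (h : EuclideanSpace ℝ (Fin d) → ℝ) (hh : ContDiff ℝ 1 h)
    (F : EuclideanSpace ℝ (Fin d) → EuclideanSpace ℝ (Fin d))
    (Ψ : EuclideanSpace ℝ (Fin d) → ℝ)
    (hΨdef : ∀ y : EuclideanSpace ℝ (Fin d), Ψ y = ⟪gradient h y, F y⟫ + γ * h y)
    (hΨlip : LipschitzWith l.toNNReal Ψ)
    (hF : ∀ y : EuclideanSpace ℝ (Fin d), ‖F y‖ ≤ δ)
    (x : ℝ → EuclideanSpace ℝ (Fin d))
    (hx : ∀ t ∈ Set.Icc (0 : ℝ) dt, HasDerivAt x (F (x t)) t)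
    (h0 : 0 ≤ h (x 0)) (hmargin : l * δ * dt ≤ Ψ (x 0)) :
    ∀ t ∈ Set.Icc (0 : ℝ) dt, 0 ≤ h (x t) := by
  -- derivative of φ = h ∘ x
  have hφ : ∀ t ∈ Set.Icc (0 : ℝ) dt,
      HasDerivAt (fun s => h (x s)) ⟪gradient h (x t), F (x t)⟫ t := by
    intro t ht
    have hdiff : DifferentiableAt ℝ h (x t) := (hh.differentiable one_ne_zero) (x t)
    have hg : HasGradientAt h (gradient h (x t)) (x t) := hdiff.hasGradientAt
    have hfd := hg.hasFDerivAt
    have := hfd.comp_hasDerivAt t (hx t ht)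
    simpa [Function.comp_def] using this
  -- bound ‖x t - x 0‖ ≤ δ * t
  have hdist : ∀ t ∈ Set.Icc (0 : ℝ) dt, ‖x t - x 0‖ ≤ δ * t := by
    intro t ht
    have h0mem : (0 : ℝ) ∈ Set.Icc (0 : ℝ) dt := ⟨le_rfl, hdt.le⟩
    have := (convex_Icc (0:ℝ) dt).norm_image_sub_le_of_norm_hasDerivWithin_le
      (f := x) (f' := fun s => F (x s)) (C := δ)
      (fun s hs => (hx s hs).hasDerivWithinAt) (fun s _ => hF (x s)) h0mem ht
    simpa [Real.norm_of_nonneg ht.1] using this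
  -- Ψ nonneg along the trajectory
  have hΨpos : ∀ t ∈ Set.Icc (0 : ℝ) dt, 0 ≤ Ψ (x t) := by
    intro t ht
    have hlip := hΨlip.dist_le_mul (x t) (x 0)
    rw [Real.dist_eq] at hlip
    have hcoe : (l.toNNReal : ℝ) = l := Real.coe_toNNReal l hl
    have hd1 : dist (x t) (x 0) = ‖x t - x 0‖ := dist_eq_norm _ _
    have h1 : |Ψ (x t) - Ψ (x 0)| ≤ l * (δ * t) := by
      calc |Ψ (x t) - Ψ (x 0)| ≤ l * dist (x t) (x 0) := by rwa [hcoe] at hlip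
        _ ≤ l * (δ * t) := by
            rw [hd1]; exact mul_le_mul_of_nonneg_left (hdist t ht) hl
    have h2 : l * (δ * t) ≤ l * δ * dt := by
      rw [← mul_assoc]
      exact mul_le_mul_of_nonneg_left ht.2 (mul_nonneg hl hδ)
    have h1' : |Ψ (x 0) - Ψ (x t)| ≤ l * (δ * t) := by rwa [abs_sub_comm]
    have h3 : Ψ (x 0) - Ψ (x t) ≤ l * δ * dt :=
      le_trans (le_trans (le_abs_self _) h1') h2
    linarith
  -- ψ t = exp (γ t) * h (x t) is monotone on [0, dt]
  set ψ : ℝ → ℝ := fun t => Real.exp (γ * t) * h (x t) with hψdef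
  have hψderiv : ∀ t ∈ Set.Icc (0 : ℝ) dt,
      HasDerivAt ψ (Real.exp (γ * t) * Ψ (x t)) t := by
    intro t ht
    have he : HasDerivAt (fun s => Real.exp (γ * s)) (γ * Real.exp (γ * t)) t := by
      have := (Real.hasDerivAt_exp (γ * t)).comp t ((hasDerivAt_id t).const_mul γ)
      simpa [mul_comm, Function.comp_def] using this
    have := he.mul (hφ t ht)
    have heq : γ * Real.exp (γ * t) * h (x t)
        + Real.exp (γ * t) * ⟪gradient h (x t), F (x t)⟫
        = Real.exp (γ * t) * Ψ (x t) := by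
      rw [hΨdef]; ring
    rw [← heq]; exact this
  have hmono : MonotoneOn ψ (Set.Icc (0 : ℝ) dt) := by
    apply monotoneOn_of_deriv_nonneg (convex_Icc 0 dt)
    · exact fun t ht => (hψderiv t ht).continuousAt.continuousWithinAt
    · intro t ht
      rw [interior_Icc] at ht
      exact (hψderiv t ⟨ht.1.le, ht.2.le⟩).differentiableAt.differentiableWithinAt
    · intro t ht
      rw [interior_Icc] at ht
      have ht' : t ∈ Set.Icc (0:ℝ) dt := ⟨ht.1.le, ht.2.le⟩
      rw [(hψderiv t ht').deriv]
      exact mul_nonneg (Real.exp_nonneg _) (hΨpos t ht')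
  intro t ht
  have h0mem : (0 : ℝ) ∈ Set.Icc (0 : ℝ) dt := ⟨le_rfl, hdt.le⟩
  have := hmono h0mem ht ht.1
  have hψ0 : ψ 0 = h (x 0) := by
    show Real.exp (γ * 0) * h (x 0) = h (x 0); simp
  have hψt : 0 ≤ Real.exp (γ * t) * h (x t) := by
    have h4 : (0:ℝ) ≤ ψ t := by rw [← hψ0] at h0; linarith
    exact h4
  have hexp : 0 < Real.exp (γ * t) := Real.exp_pos _
  exact nonneg_of_mul_nonneg_right hψt hexp
end
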